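/- Cosine modulation theorem for the OFT: for integrable u : ℝ³ → 𝕆 and f₀ ∈ ℝ, the OFT of x ↦ u(x)·cos(2πf₀x₁) at (f₁,f₂,f₃) equals (U(f₁+f₀,f₂,f₃) + U(f₁−f₀,f₂,f₃))/2, where U is the OFT of u. -/

import Mathlib

noncomputable section
open MeasureTheory Real

/-- Octonions as the Cayley–Dickson double of the quaternions:
pairs of quaternions with the Cayley–Dickson product `omul`.
(The additive, scalar and topological structure is the product structure.) -/
abbrev Octonion : Type := Quaternion ℝ × Quaternion ℝ

/-- Cayley–Dickson multiplication of octonions. -/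
def omul (x y : Octonion) : Octonion :=
  (x.1 * y.1 - star y.2 * x.2, y.2 * x.1 + x.2 * star y.1)

/-- The octonion `1`. -/
def oone : Octonion := (1, 0)

/-- Octonion conjugation. -/
def oconj (x : Octonion) : Octonion := (star x.1, -x.2)

/-- Real part of an octonion. -/
def ore (x : Octonion) : ℝ := x.1.re

/-- `o · o*`, as a real number (its imaginary part vanishes). -/
def onormSq (x : Octonion) : ℝ := ore (omul x (oconj x))

/-- The octonion norm `|o| = √(o·o*)`. -/
def oabs (x : Octonion) : ℝ := Real.sqrt (onormSq x)

/-- Inverse of a (nonzero) octonion. -/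
def oinv (x : Octonion) : Octonion := (onormSq x)⁻¹ • oconj x

def e1 : Octonion := ((⟨0,1,0,0⟩ : Quaternion ℝ), 0)
def e2 : Octonion := ((⟨0,0,1,0⟩ : Quaternion ℝ), 0)
def e3 : Octonion := ((⟨0,0,0,1⟩ : Quaternion ℝ), 0)
def e4 : Octonion := (0, (⟨1,0,0,0⟩ : Quaternion ℝ))
def e5 : Octonion := (0, (⟨0,1,0,0⟩ : Quaternion ℝ))
def e6 : Octonion := (0, (⟨0,0,1,0⟩ : Quaternion ℝ))
def e7 : Octonion := (0, (⟨0,0,0,1⟩ : Quaternion ℝ))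

/-- Powers of an octonion (well defined since octonions are power-associative). -/
def opow (o : Octonion) : ℕ → Octonion
  | 0 => oone
  | n + 1 => omul o (opow o n)

/-- The octonion exponential `exp o = ∑ oᵏ/k!`. -/
def octExp (o : Octonion) : Octonion :=
  ∑' k : ℕ, ((k.factorial : ℝ)⁻¹) • opow o k

/-- The octonion Fourier transform of `u : ℝ³ → 𝕆`,
with octonion products evaluated left to right. -/
def OFT (u : ℝ × ℝ × ℝ → Octonion) (f : ℝ × ℝ × ℝ) : Octonion :=
  ∫ x : ℝ × ℝ × ℝ,
    omul (omul (omul (u x) (octExp ((-(2 * π * f.1 * x.1)) • e1)))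
        (octExp ((-(2 * π * f.2.1 * x.2.1)) • e2)))
      (octExp ((-(2 * π * f.2.2 * x.2.2)) • e4))

lemma omul_smul_right (r : ℝ) (x y : Octonion) : omul x (r • y) = r • omul x y := by
  simp [omul, Prod.smul_def, smul_sub, smul_add]
lemma omul_smul_left (r : ℝ) (x y : Octonion) : omul (r • x) y = r • omul x y := by
  simp [omul, Prod.smul_def, smul_sub, smul_add, mul_smul_comm, smul_mul_assoc]
lemma omul_add_right (x y z : Octonion) : omul x (y + z) = omul x y + omul x z := by
  simp only [omul, Prod.fst_add, Prod.snd_add, Prod.mk_add_mk, mul_add, add_mul, star_add,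
    Prod.mk.injEq]
  constructor <;> abel
lemma omul_add_left (x y z : Octonion) : omul (x + y) z = omul x z + omul y z := by
  simp only [omul, Prod.fst_add, Prod.snd_add, Prod.mk_add_mk, mul_add, add_mul, Prod.mk.injEq]
  constructor <;> abel
lemma omul_oone (x : Octonion) : omul x oone = x := by simp [omul, oone]
lemma e1_sq : omul e1 e1 = -oone := by
  ext <;> simp [omul, e1, oone, Quaternion.ext_iff] <;> erw [QuaternionAlgebra.mk_mul_mk] <;> simp <;> rfl
lemma e2_sq : omul e2 e2 = -oone := by
  ext <;> simp [omul, e2, oone, Quaternion.ext_iff] <;> erw [QuaternionAlgebra.mk_mul_mk] <;> simp <;> rfl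
lemma e4_sq : omul e4 e4 = -oone := by
  ext <;> simp [omul, e4, oone, Quaternion.ext_iff] <;> erw [QuaternionAlgebra.mk_mul_mk] <;> simp <;> rfl

lemma opow_smul (e : Octonion) (he : omul e e = -oone) (t : ℝ) (n : ℕ) :
    opow (t • e) (2 * n) = ((-1 : ℝ) ^ n * t ^ (2 * n)) • oone ∧
    opow (t • e) (2 * n + 1) = ((-1 : ℝ) ^ n * t ^ (2 * n + 1)) • e := by
  induction n with
  | zero => simp [opow, omul_smul_left, omul_oone]
  | succ n ih =>
    have h2 : 2 * (n + 1) = (2 * n + 1) + 1 := by ring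
    have heven : opow (t • e) (2 * (n + 1)) = ((-1 : ℝ) ^ (n+1) * t ^ (2 * (n+1))) • oone := by
      rw [h2]
      show omul (t • e) (opow (t • e) (2 * n + 1)) = _
      rw [ih.2, omul_smul_left, omul_smul_right, he, smul_smul, smul_neg, ← neg_smul]
      congr 1
      ring
    refine ⟨heven, ?_⟩
    show omul (t • e) (opow (t • e) (2 * (n + 1))) = _
    rw [heven, omul_smul_left, omul_smul_right, omul_oone, smul_smul]
    congr 1
    ring

lemma octExp_smul (e : Octonion) (he : omul e e = -oone) (t : ℝ) :
    octExp (t • e) = Real.cos t • oone + Real.sin t • e := by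
  have hc := (Real.hasSum_cos t).smul_const oone
  have hs := (Real.hasSum_sin t).smul_const e
  have h : HasSum (fun k : ℕ => ((k.factorial : ℝ)⁻¹) • opow (t • e) k)
      (Real.cos t • oone + Real.sin t • e) := by
    refine HasSum.even_add_odd ?_ ?_
    · convert hc using 2 with n
      rw [(opow_smul e he t n).1, smul_smul]
      congr 1
      field_simp
    · convert hs using 2 with n
      rw [(opow_smul e he t n).2, smul_smul]
      congr 1
      field_simp
  exact h.tsum_eq

/-- cosine modulation identity for the exponential -/
lemma cos_smul_octExp (a t : ℝ) :
    Real.cos t • octExp ((-a) • e1) =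
      (2:ℝ)⁻¹ • (octExp ((-(a + t)) • e1) + octExp ((-(a - t)) • e1)) := by
  rw [octExp_smul e1 e1_sq, octExp_smul e1 e1_sq, octExp_smul e1 e1_sq]
  rw [show -(a+t) = -a - t from by ring, show -(a-t) = -a + t from by ring,
    Real.cos_sub, Real.cos_add, Real.sin_sub, Real.sin_add]
  module

def rmulLM (b : Octonion) : Octonion →ₗ[ℝ] Octonion where
  toFun x := omul x b
  map_add' x y := omul_add_left x y b
  map_smul' r x := omul_smul_left r x b

def rmulCLM (b : Octonion) : Octonion →L[ℝ] Octonion :=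
  LinearMap.toContinuousLinearMap (rmulLM b)

lemma integrable_smul_bdd {α : Type*} [MeasurableSpace α] {μ : Measure α}
    {v : α → Octonion} (hv : Integrable v μ) {g : α → ℝ} (hg : Measurable g)
    (hb : ∀ x, |g x| ≤ 1) : Integrable (fun x => g x • v x) μ := by
  refine Integrable.mono' hv.norm (hg.aestronglyMeasurable.smul hv.aestronglyMeasurable)
    (ae_of_all _ fun x => ?_)
  rw [norm_smul, Real.norm_eq_abs]
  calc |g x| * ‖v x‖ ≤ 1 * ‖v x‖ := by
        exact mul_le_mul_of_nonneg_right (hb x) (norm_nonneg _)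
    _ = ‖v x‖ := one_mul _

lemma integrable_omul_octExp {α : Type*} [MeasurableSpace α] {μ : Measure α}
    {v : α → Octonion} (hv : Integrable v μ) (e : Octonion) (he : omul e e = -oone)
    {c : α → ℝ} (hc : Measurable c) :
    Integrable (fun x => omul (v x) (octExp (c x • e))) μ := by
  have heq : (fun x => omul (v x) (octExp (c x • e)))
      = fun x => Real.cos (c x) • v x + Real.sin (c x) • (omul (v x) e) := by
    funext x
    rw [octExp_smul e he, omul_add_right, omul_smul_right, omul_smul_right, omul_oone]
  rw [heq]
  have hve : Integrable (fun x => omul (v x) e) μ := (rmulCLM e).integrable_comp hv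
  exact (integrable_smul_bdd hv (Real.measurable_cos.comp hc)
      (fun x => Real.abs_cos_le_one _)).add
    (integrable_smul_bdd hve (Real.measurable_sin.comp hc)
      (fun x => Real.abs_sin_le_one _))


theorem OFT_cosine_modulation (u : ℝ × ℝ × ℝ → Octonion) (hu : Integrable u)
    (f₀ f₁ f₂ f₃ : ℝ) :
    OFT (fun x => Real.cos (2 * π * f₀ * x.1) • u x) (f₁, f₂, f₃) =
      (2 : ℝ)⁻¹ • (OFT u (f₁ + f₀, f₂, f₃) + OFT u (f₁ - f₀, f₂, f₃)) := by
  set Fp : ℝ × ℝ × ℝ → Octonion := fun x =>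
    omul (omul (omul (u x) (octExp ((-(2 * π * (f₁ + f₀) * x.1)) • e1)))
        (octExp ((-(2 * π * f₂ * x.2.1)) • e2)))
      (octExp ((-(2 * π * f₃ * x.2.2)) • e4)) with hFp
  set Fm : ℝ × ℝ × ℝ → Octonion := fun x =>
    omul (omul (omul (u x) (octExp ((-(2 * π * (f₁ - f₀) * x.1)) • e1)))
        (octExp ((-(2 * π * f₂ * x.2.1)) • e2)))
      (octExp ((-(2 * π * f₃ * x.2.2)) • e4)) with hFm
  have hmeas1 : Measurable fun x : ℝ × ℝ × ℝ => -(2 * π * (f₁ + f₀) * x.1) := by fun_prop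
  have hmeas1' : Measurable fun x : ℝ × ℝ × ℝ => -(2 * π * (f₁ - f₀) * x.1) := by fun_prop
  have hmeas2 : Measurable fun x : ℝ × ℝ × ℝ => -(2 * π * f₂ * x.2.1) := by fun_prop
  have hmeas3 : Measurable fun x : ℝ × ℝ × ℝ => -(2 * π * f₃ * x.2.2) := by fun_prop
  have hFpInt : Integrable Fp := by
    exact integrable_omul_octExp (integrable_omul_octExp
      (integrable_omul_octExp hu e1 e1_sq hmeas1) e2 e2_sq hmeas2) e4 e4_sq hmeas3
  have hFmInt : Integrable Fm := by
    exact integrable_omul_octExp (integrable_omul_octExp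
      (integrable_omul_octExp hu e1 e1_sq hmeas1') e2 e2_sq hmeas2) e4 e4_sq hmeas3
  have key : (fun x : ℝ × ℝ × ℝ =>
      omul (omul (omul ((Real.cos (2 * π * f₀ * x.1)) • u x)
          (octExp ((-(2 * π * f₁ * x.1)) • e1)))
        (octExp ((-(2 * π * f₂ * x.2.1)) • e2)))
      (octExp ((-(2 * π * f₃ * x.2.2)) • e4)))
      = fun x => (2:ℝ)⁻¹ • (Fp x + Fm x) := by
    funext x
    have h1 : omul ((Real.cos (2 * π * f₀ * x.1)) • u x) (octExp ((-(2 * π * f₁ * x.1)) • e1))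
        = (2:ℝ)⁻¹ • (omul (u x) (octExp ((-(2 * π * (f₁ + f₀) * x.1)) • e1))
            + omul (u x) (octExp ((-(2 * π * (f₁ - f₀) * x.1)) • e1))) := by
      rw [omul_smul_left, ← omul_smul_right, cos_smul_octExp (2 * π * f₁ * x.1),
        show 2 * π * f₁ * x.1 + 2 * π * f₀ * x.1 = 2 * π * (f₁ + f₀) * x.1 from by ring,
        show 2 * π * f₁ * x.1 - 2 * π * f₀ * x.1 = 2 * π * (f₁ - f₀) * x.1 from by ring,
        omul_smul_right, omul_add_right]
    rw [h1, omul_smul_left, omul_add_left, omul_smul_left, omul_add_left]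
  show (∫ x : ℝ × ℝ × ℝ, omul (omul (omul ((Real.cos (2 * π * f₀ * x.1)) • u x)
          (octExp ((-(2 * π * f₁ * x.1)) • e1)))
        (octExp ((-(2 * π * f₂ * x.2.1)) • e2)))
      (octExp ((-(2 * π * f₃ * x.2.2)) • e4))) = _
  rw [key]
  rw [integral_smul, integral_add hFpInt hFmInt]
  rfl
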